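/- For every closed set K ⊆ ℝⁿ with ∫_K |x|₁ dλ_n(x) < ∞, the function t ↦ λ_n(tK) is differentiable at t = 1 and (d/dt) λ_n(tK)|_{t=1} = n·λ_n(K) − ∫_K |x|₁ dλ_n(x). -/

import Mathlib

open MeasureTheory Real Set
open scoped Pointwise

open scoped ENNReal NNReal Filter

/-- The standard exponential measure `λ_n` on `ℝⁿ`, with density
`2⁻ⁿ exp(-|x|₁)` with respect to Lebesgue measure. -/
noncomputable def lamR (n : ℕ) : MeasureTheory.Measure (Fin n → ℝ) :=
  MeasureTheory.volume.withDensity fun x =>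
    ENNReal.ofReal (((2 : ℝ) ^ n)⁻¹ * Real.exp (-(∑ i, |x i|)))


lemma aux_S_cont {n : ℕ} : Continuous (fun x : Fin n → ℝ => ∑ i, |x i|) :=
  continuous_finset_sum _ fun i _ => (continuous_apply i).abs

lemma aux_exp_neg_abs {b : ℝ} (hb : 0 < b) :
    Integrable (fun x : ℝ => Real.exp (-(b * |x|))) := by
  have hIoi : IntegrableOn (fun x : ℝ => Real.exp (-(b * |x|))) (Ioi 0) := by
    apply (exp_neg_integrableOn_Ioi 0 hb).congr_fun ?_ measurableSet_Ioi
    intro x hx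
    simp [abs_of_pos (show (0:ℝ) < x from hx), neg_mul]
  have hIci : IntegrableOn (fun x : ℝ => Real.exp (-(b * |x|))) (Ici 0) :=
    Iff.mpr integrableOn_Ici_iff_integrableOn_Ioi hIoi
  have hIic : IntegrableOn (fun x : ℝ => Real.exp (-(b * |x|))) (Iic 0) := by
    rw [← (Measure.measurePreserving_neg (volume : Measure ℝ)).integrableOn_comp_preimage
        (Homeomorph.neg ℝ).measurableEmbedding]
    simp only [Function.comp_def, abs_neg, neg_preimage, neg_Iic, neg_zero]
    exact hIci
  rw [← integrableOn_univ, ← Iic_union_Ioi (a := (0:ℝ))]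
  exact hIic.union hIoi

lemma aux_exp_neg_S {n : ℕ} {b : ℝ} (hb : 0 < b) :
    Integrable (fun x : Fin n → ℝ => Real.exp (-(b * ∑ i, |x i|))) := by
  have h : (fun x : Fin n → ℝ => Real.exp (-(b * ∑ i, |x i|))) =
      fun x => ∏ i, Real.exp (-(b * |x i|)) := by
    ext x
    rw [← Real.exp_sum]
    congr 1
    rw [Finset.mul_sum] at *
    simp [Finset.sum_neg_distrib]
  rw [h]
  exact Integrable.fintype_prod (fun _ => aux_exp_neg_abs hb)

lemma aux_bound_integrable {n : ℕ} :
    Integrable (fun x : Fin n → ℝ =>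
      (∑ i, |x i|) * (((2:ℝ)^n)⁻¹ * Real.exp (-((1:ℝ)/2 * ∑ i, |x i|)))) := by
  have hc : (0:ℝ) ≤ ((2:ℝ)^n)⁻¹ := by positivity
  apply Integrable.mono' (((aux_exp_neg_S (n := n) (b := (1:ℝ)/4) (by norm_num)).const_mul
      (4 * ((2:ℝ)^n)⁻¹)))
  · exact ((aux_S_cont.mul (continuous_const.mul
      ((continuous_const.mul aux_S_cont).neg.rexp)))).aestronglyMeasurable
  · filter_upwards with x
    set u : ℝ := ∑ i, |x i| with hu
    have hu0 : 0 ≤ u := Finset.sum_nonneg fun i _ => abs_nonneg _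
    have h1 : u ≤ 4 * Real.exp ((1:ℝ)/4 * u) := by
      have := Real.add_one_le_exp ((1:ℝ)/4 * u)
      nlinarith [Real.exp_pos ((1:ℝ)/4 * u)]
    have hnn : 0 ≤ u * (((2:ℝ)^n)⁻¹ * Real.exp (-((1:ℝ)/2 * u))) := by positivity
    rw [Real.norm_of_nonneg hnn]
    have h2 : u * (((2:ℝ)^n)⁻¹ * Real.exp (-((1:ℝ)/2 * u))) ≤
        (4 * Real.exp ((1:ℝ)/4 * u)) * (((2:ℝ)^n)⁻¹ * Real.exp (-((1:ℝ)/2 * u))) := by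
      apply mul_le_mul_of_nonneg_right h1 (by positivity)
    refine h2.trans (le_of_eq ?_)
    rw [mul_comm (4 * ((2:ℝ)^n)⁻¹)]
    rw [show (4:ℝ) * Real.exp (1/4*u) * (((2:ℝ)^n)⁻¹ * Real.exp (-(1/2*u)))
        = Real.exp (1/4*u) * Real.exp (-(1/2*u)) * (4 * ((2:ℝ)^n)⁻¹) by ring,
      ← Real.exp_add]
    ring_nf


lemma aux_rho_cont {n : ℕ} :
    Continuous (fun x : Fin n → ℝ => ((2:ℝ)^n)⁻¹ * Real.exp (-(∑ i, |x i|))) :=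
  continuous_const.mul aux_S_cont.neg.rexp

lemma aux_rho_nonneg {n : ℕ} (x : Fin n → ℝ) :
    0 ≤ ((2:ℝ)^n)⁻¹ * Real.exp (-(∑ i, |x i|)) := by positivity

lemma aux_lamR_toReal {n : ℕ} {s : Set (Fin n → ℝ)} (hs : MeasurableSet s) :
    (lamR n s).toReal = ∫ x in s, ((2:ℝ)^n)⁻¹ * Real.exp (-(∑ i, |x i|)) := by
  rw [lamR, withDensity_apply _ hs]
  exact (integral_eq_lintegral_of_nonneg_ae (ae_of_all _ aux_rho_nonneg)
    aux_rho_cont.aestronglyMeasurable.restrict).symm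

lemma aux_integral_lamR {n : ℕ} {s : Set (Fin n → ℝ)} (hs : MeasurableSet s)
    (g : (Fin n → ℝ) → ℝ) :
    ∫ x in s, g x ∂(lamR n) =
      ∫ x in s, (((2:ℝ)^n)⁻¹ * Real.exp (-(∑ i, |x i|))) * g x := by
  have hmeas : Measurable fun x : Fin n → ℝ =>
      (((2:ℝ)^n)⁻¹ * Real.exp (-(∑ i, |x i|))).toNNReal :=
    aux_rho_cont.measurable.real_toNNReal
  rw [lamR, restrict_withDensity hs]
  rw [show (fun x : Fin n → ℝ => ENNReal.ofReal (((2:ℝ)^n)⁻¹ * Real.exp (-(∑ i, |x i|))))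
      = fun x => ((((2:ℝ)^n)⁻¹ * Real.exp (-(∑ i, |x i|))).toNNReal : ℝ≥0∞) from rfl]
  rw [integral_withDensity_eq_integral_smul hmeas]
  congr 1
  ext x
  rw [NNReal.smul_def, Real.coe_toNNReal _ (aux_rho_nonneg x), smul_eq_mul]

set_option maxHeartbeats 1000000 in
lemma aux_smul_eq {n : ℕ} {K : Set (Fin n → ℝ)} (hK : IsClosed K) {t : ℝ} (ht : 0 < t) :
    (lamR n (t • K)).toReal =
      t ^ n * ∫ x in K, ((2:ℝ)^n)⁻¹ * Real.exp (-(t * ∑ i, |x i|)) := by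
  have hmeas : MeasurableSet (t • K) := (hK.smul_of_ne_zero ht.ne').measurableSet
  rw [aux_lamR_toReal hmeas]
  have h := Measure.setIntegral_comp_smul_of_pos (volume : Measure (Fin n → ℝ))
      (fun x => ((2:ℝ)^n)⁻¹ * Real.exp (-(∑ i, |x i|))) K ht
  rw [Module.finrank_fin_fun] at h
  have h2 : (∫ x in t • K, ((2:ℝ)^n)⁻¹ * Real.exp (-(∑ i, |x i|)))
      = t ^ n * ∫ x in K, ((2:ℝ)^n)⁻¹ * Real.exp (-(∑ i, |(t • x) i|)) := by
    rw [h, smul_eq_mul, ← mul_assoc, mul_inv_cancel₀ (pow_ne_zero _ ht.ne'), one_mul]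
  rw [h2]
  congr 1
  refine setIntegral_congr_fun hK.measurableSet fun x _ => ?_
  have hcoord : ∀ i, |(t • x) i| = t * |x i| := fun i => by
    simp [abs_mul, abs_of_pos ht]
  simp only [hcoord, ← Finset.mul_sum]

set_option maxHeartbeats 1600000 in
/-- For a closed set `K ⊆ ℝⁿ` with `∫_K |x|₁ dλ_n < ∞`, the function
`t ↦ λ_n(tK)` is differentiable at `t = 1` with derivative
`n·λ_n(K) - ∫_K |x|₁ dλ_n(x)`. -/
theorem hasDerivAt_exponential_dilation
    (n : ℕ) (K : Set (Fin n → ℝ)) (hK_closed : IsClosed K)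
    (hint : IntegrableOn (fun x => ∑ i, |x i|) K (lamR n)) :
    HasDerivAt (fun t : ℝ => (lamR n (t • K)).toReal)
      (n * (lamR n K).toReal - ∫ x in K, ∑ i, |x i| ∂(lamR n)) 1 := by
  have hKm : MeasurableSet K := hK_closed.measurableSet
  have hSnn : ∀ x : Fin n → ℝ, 0 ≤ ∑ i, |x i| := fun x =>
    Finset.sum_nonneg fun i _ => abs_nonneg _
  have hcnn : (0:ℝ) ≤ ((2:ℝ)^n)⁻¹ := by positivity
  -- derivative of the inner integral
  have key := hasDerivAt_integral_of_dominated_loc_of_deriv_le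
    (μ := (volume : Measure (Fin n → ℝ)).restrict K) (x₀ := (1:ℝ)) (s := Metric.ball (1:ℝ) (1/2))
    (F := fun t x => ((2:ℝ)^n)⁻¹ * Real.exp (-(t * ∑ i, |x i|)))
    (F' := fun t x => -((∑ i, |x i|) * (((2:ℝ)^n)⁻¹ * Real.exp (-(t * ∑ i, |x i|)))))
    (bound := fun x => (∑ i, |x i|) * (((2:ℝ)^n)⁻¹ * Real.exp (-((1:ℝ)/2 * ∑ i, |x i|))))
    (Metric.ball_mem_nhds _ (by norm_num))
    (Filter.Eventually.of_forall fun t =>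
      (continuous_const.mul ((continuous_const.mul aux_S_cont).neg.rexp)).aestronglyMeasurable.restrict)
    (((aux_exp_neg_S (n := n) (b := (1:ℝ)) one_pos).const_mul ((2:ℝ)^n)⁻¹).restrict)
    (((aux_S_cont.mul
      (continuous_const.mul ((continuous_const.mul aux_S_cont).neg.rexp))).neg).aestronglyMeasurable.restrict)
    ?_
    (aux_bound_integrable.restrict)
    ?_
  · obtain ⟨-, hG⟩ := key
    have hprod := (hasDerivAt_pow n (1:ℝ)).mul hG
    have hev : (fun t : ℝ => (lamR n (t • K)).toReal) =ᶠ[nhds 1]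
        fun t => t ^ n * ∫ x in K, ((2:ℝ)^n)⁻¹ * Real.exp (-(t * ∑ i, |x i|)) := by
      filter_upwards [isOpen_Ioi.mem_nhds (show (1:ℝ) ∈ Ioi 0 by norm_num)] with t ht
      exact aux_smul_eq hK_closed ht
    have hfinal := hprod.congr_of_eventuallyEq hev
    refine hfinal.congr_deriv ?_
    symm
    rw [aux_lamR_toReal hKm, aux_integral_lamR hKm]
    simp only [one_mul, one_pow, mul_one, pow_one, integral_neg, ← sub_eq_add_neg]
    congr 1
    exact setIntegral_congr_fun hKm fun x _ => mul_comm _ _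
  · -- bound
    filter_upwards with x
    intro t ht
    rw [Metric.mem_ball, Real.dist_eq] at ht
    have ht2 : (1:ℝ)/2 < t := by
      have := abs_lt.mp ht
      linarith [this.1]
    have hnn : (0:ℝ) ≤ (∑ i, |x i|) * (((2:ℝ)^n)⁻¹ * Real.exp (-(t * ∑ i, |x i|))) := by
      have := Real.exp_pos (-(t * ∑ i, |x i|))
      have := hSnn x
      positivity
    rw [norm_neg, Real.norm_of_nonneg hnn]
    apply mul_le_mul_of_nonneg_left _ (hSnn x)
    apply mul_le_mul_of_nonneg_left _ hcnn
    apply Real.exp_le_exp.mpr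
    apply neg_le_neg
    exact mul_le_mul_of_nonneg_right ht2.le (hSnn x)
  · -- differentiability
    filter_upwards with x
    intro t ht
    have h := (((hasDerivAt_mul_const (∑ i, |x i|)).neg.exp).const_mul
      (((2:ℝ)^n)⁻¹) : HasDerivAt (fun t : ℝ => ((2:ℝ)^n)⁻¹ * Real.exp (-(t * ∑ i, |x i|))) _ t)
    refine h.congr_deriv ?_
    simp only [Pi.neg_apply]
    ring
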